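/- arXiv:2203.08997 — 5 statements merged into one kernel-verified Lean document; each statement's English description precedes it below -/
import Mathlib

section
/- There exists a constant C > 0 such that for all positive integers ℓ, ℓ', l̄ satisfying the triangle inequalities ℓ ≤ ℓ' + l̄, ℓ' ≤ ℓ + l̄, l̄ ≤ ℓ + ℓ' and such that L := ℓ + ℓ' + l̄ is odd, it holds |P(ℓ, ℓ', l̄)| ≤ C · min{ √ℓ·√ℓ', √ℓ·√l̄, √ℓ'·√l̄ }. -/
/-- `Δ(ℓ, ℓ', l̄) := sqrt((ℓ+ℓ'-l̄)! (ℓ-ℓ'+l̄)! (-ℓ+ℓ'+l̄)! / (ℓ+ℓ'+l̄+1)!)`. -/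
noncomputable def Δ (l l' lb : ℕ) : ℝ :=
  Real.sqrt (((l + l' - lb).factorial * (l + lb - l').factorial * (l' + lb - l).factorial : ℝ)
    / ((l + l' + lb + 1).factorial : ℝ))

/-- The factor `P(ℓ, ℓ', l̄)` appearing in the explicit formula for the structure constants
of the spherical harmonics with respect to the Poisson bracket on the sphere (for
`L := ℓ+ℓ'+l̄` odd). -/
noncomputable def P (l l' lb : ℕ) : ℝ :=
  (-1 : ℝ) ^ ((l + l' - lb + 1) / 2) * Δ l l' lb * ((l + l' + lb : ℝ) + 1) *
    (((l + l' + lb - 1) / 2).factorial : ℝ) /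
      ((((l' + lb - l - 1) / 2).factorial : ℝ) * (((l + lb - l' - 1) / 2).factorial : ℝ) *
        (((l + l' - lb - 1) / 2).factorial : ℝ))

open Nat

lemma cb_sq_le (n : ℕ) : centralBinom n ^ 2 * (2 * n + 1) ≤ 16 ^ n := by
  induction n with
  | zero => simp [Nat.centralBinom]
  | succ n ih =>
    refine Nat.le_of_mul_le_mul_left ?_ (show 0 < (n + 1) ^ 2 by positivity)
    have h := Nat.succ_mul_centralBinom_succ n
    calc (n + 1) ^ 2 * (centralBinom (n + 1) ^ 2 * (2 * (n + 1) + 1))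
        = ((n + 1) * centralBinom (n + 1)) ^ 2 * (2 * n + 3) := by ring
      _ = (2 * (2 * n + 1) * centralBinom n) ^ 2 * (2 * n + 3) := by rw [h]
      _ = (4 * (2 * n + 1) * (2 * n + 3)) * (centralBinom n ^ 2 * (2 * n + 1)) := by ring
      _ ≤ (4 * (2 * n + 1) * (2 * n + 3)) * 16 ^ n := Nat.mul_le_mul_left _ ih
      _ ≤ (16 * (n + 1) ^ 2) * 16 ^ n := Nat.mul_le_mul_right _ (by nlinarith)
      _ = (n + 1) ^ 2 * 16 ^ (n + 1) := by ring

lemma le_cb_sq (n : ℕ) (hn : 1 ≤ n) : 16 ^ n ≤ 4 * n * centralBinom n ^ 2 := by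
  induction n, hn using Nat.le_induction with
  | base => decide
  | succ n hn ih =>
    refine Nat.le_of_mul_le_mul_left ?_ (show 0 < (n + 1) ^ 2 by positivity)
    have h := Nat.succ_mul_centralBinom_succ n
    calc (n + 1) ^ 2 * 16 ^ (n + 1)
        = (16 * (n + 1) ^ 2) * 16 ^ n := by ring
      _ ≤ (16 * (n + 1) ^ 2) * (4 * n * centralBinom n ^ 2) := Nat.mul_le_mul_left _ ih
      _ = (16 * n * (n + 1)) * (4 * (n + 1) * centralBinom n ^ 2) := by ring
      _ ≤ (4 * (2 * n + 1) ^ 2) * (4 * (n + 1) * centralBinom n ^ 2) :=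
          Nat.mul_le_mul_right _ (by nlinarith)
      _ = 4 * (n + 1) * ((2 * (2 * n + 1) * centralBinom n) ^ 2) := by ring
      _ = 4 * (n + 1) * (((n + 1) * centralBinom (n + 1)) ^ 2) := by rw [h]
      _ = (n + 1) ^ 2 * (4 * (n + 1) * centralBinom (n + 1) ^ 2) := by ring

lemma fact_odd (a : ℕ) :
    (2 * a + 1).factorial = (2 * a + 1) * (centralBinom a * (a.factorial * a.factorial)) := by
  have h : centralBinom a * a.factorial * (2 * a - a).factorial = (2 * a).factorial := by
    rw [centralBinom_eq_two_mul_choose]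
    exact Nat.choose_mul_factorial_mul_factorial (by omega)
  rw [show 2 * a - a = a from by omega] at h
  rw [Nat.factorial_succ, ← h]
  ring

lemma reduced (a b c x y : ℕ)
    (h : (2 * a + 1) * (2 * b + 1) * (2 * c + 1) * (a + b + c + 1) ≤ 16 * (x * y) ^ 2) :
    ((2 * a + 1) * centralBinom a) ^ 2 * ((2 * b + 1) * centralBinom b) ^ 2 *
      ((2 * c + 1) * centralBinom c) ^ 2 * (2 * (a + b + c + 1) + 2) ^ 2
    ≤ (4 * (x * y)) ^ 2 * ((2 * (a + b + c + 1) + 1) * centralBinom (a + b + c + 1)) ^ 2 := by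
  set k := a + b + c + 1 with hk
  refine Nat.le_of_mul_le_mul_left ?_ (show 0 < 4 * k by omega)
  calc 4 * k * (((2 * a + 1) * centralBinom a) ^ 2 * ((2 * b + 1) * centralBinom b) ^ 2 *
        ((2 * c + 1) * centralBinom c) ^ 2 * (2 * k + 2) ^ 2)
      = ((2 * a + 1) * (centralBinom a ^ 2 * (2 * a + 1))) *
        ((2 * b + 1) * (centralBinom b ^ 2 * (2 * b + 1))) *
        ((2 * c + 1) * (centralBinom c ^ 2 * (2 * c + 1))) * ((2 * k + 2) ^ 2 * (4 * k)) := by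
        ring
    _ ≤ ((2 * a + 1) * 16 ^ a) * ((2 * b + 1) * 16 ^ b) * ((2 * c + 1) * 16 ^ c) *
        ((2 * k + 2) ^ 2 * (4 * k)) := by
        gcongr <;> exact cb_sq_le _
    _ = ((2 * a + 1) * (2 * b + 1) * (2 * c + 1) * k) * (2 * k + 2) ^ 2 * 4 *
        16 ^ (a + b + c) := by
        rw [pow_add, pow_add]; ring
    _ ≤ (16 * (x * y) ^ 2) * (4 * (2 * k + 1) ^ 2) * 4 * 16 ^ (a + b + c) := by
        gcongr
        nlinarith
    _ = (4 * (x * y)) ^ 2 * (2 * k + 1) ^ 2 * 16 ^ k := by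
        rw [hk, show a + b + c + 1 = (a + b + c) + 1 from rfl, pow_succ]; ring
    _ ≤ (4 * (x * y)) ^ 2 * (2 * k + 1) ^ 2 * (4 * k * centralBinom k ^ 2) := by
        gcongr
        exact le_cb_sq k (by omega)
    _ = 4 * k * ((4 * (x * y)) ^ 2 * ((2 * k + 1) * centralBinom k) ^ 2) := by ring

lemma core_nat (a b c x y : ℕ)
    (h : (2 * a + 1) * (2 * b + 1) * (2 * c + 1) * (a + b + c + 1) ≤ 16 * (x * y) ^ 2) :
    (2 * c + 1).factorial * (2 * b + 1).factorial * (2 * a + 1).factorial *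
      ((2 * (a + b + c + 1) + 2) * (a + b + c + 1).factorial) ^ 2
    ≤ 4 * (x * y) *
        ((2 * (a + b + c + 1) + 2).factorial *
          (a.factorial * b.factorial * c.factorial) ^ 2) := by
  set k := a + b + c + 1 with hk
  have hfk : (2 * k + 2).factorial =
      (2 * k + 2) * ((2 * k + 1) * (centralBinom k * (k.factorial * k.factorial))) := by
    rw [show 2 * k + 2 = (2 * k + 1) + 1 from rfl, Nat.factorial_succ,
      show 2 * k + 1 = 2 * k + 1 from rfl, fact_odd]
  refine (Nat.pow_le_pow_iff_left (n := 2) two_ne_zero).mp ?_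
  have R := reduced a b c x y h
  calc ((2 * c + 1).factorial * (2 * b + 1).factorial * (2 * a + 1).factorial *
        ((2 * k + 2) * k.factorial) ^ 2) ^ 2
      = (((2 * a + 1) * centralBinom a) ^ 2 * ((2 * b + 1) * centralBinom b) ^ 2 *
          ((2 * c + 1) * centralBinom c) ^ 2 * (2 * k + 2) ^ 2) *
        ((2 * k + 2) ^ 2 * k.factorial ^ 4 *
          (a.factorial * b.factorial * c.factorial) ^ 4) := by
        rw [fact_odd a, fact_odd b, fact_odd c]; ring
    _ ≤ ((4 * (x * y)) ^ 2 * ((2 * k + 1) * centralBinom k) ^ 2) *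
        ((2 * k + 2) ^ 2 * k.factorial ^ 4 *
          (a.factorial * b.factorial * c.factorial) ^ 4) := Nat.mul_le_mul_right _ R
    _ = (4 * (x * y) * ((2 * k + 2).factorial *
          (a.factorial * b.factorial * c.factorial) ^ 2)) ^ 2 := by
        rw [hfk]; ring

lemma P_eq (a b c : ℕ) :
    P (b + c + 1) (a + c + 1) (a + b + 1) =
      (-1 : ℝ) ^ (c + 1) *
        Real.sqrt ((((2 * c + 1).factorial : ℝ) * ((2 * b + 1).factorial : ℝ) *
            ((2 * a + 1).factorial : ℝ)) / ((2 * (a + b + c + 1) + 2).factorial : ℝ)) *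
        ((2 * (a + b + c + 1) + 2 : ℕ) : ℝ) * ((a + b + c + 1).factorial : ℝ) /
        ((a.factorial : ℝ) * (b.factorial : ℝ) * (c.factorial : ℝ)) := by
  simp only [P, Δ]
  rw [show b + c + 1 + (a + c + 1) - (a + b + 1) = 2 * c + 1 from by omega,
    show b + c + 1 + (a + b + 1) - (a + c + 1) = 2 * b + 1 from by omega,
    show a + c + 1 + (a + b + 1) - (b + c + 1) = 2 * a + 1 from by omega,
    show b + c + 1 + (a + c + 1) + (a + b + 1) + 1 = 2 * (a + b + c + 1) + 2 from by omega,
    show (2 * c + 1 + 1) / 2 = c + 1 from by omega,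
    show (b + c + 1 + (a + c + 1) + (a + b + 1) - 1) / 2 = a + b + c + 1 from by omega,
    show (2 * a + 1 - 1) / 2 = a from by omega,
    show (2 * b + 1 - 1) / 2 = b from by omega,
    show (2 * c + 1 - 1) / 2 = c from by omega]
  push_cast
  ring

lemma P_abs_le (a b c x y : ℕ)
    (h : (2 * a + 1) * (2 * b + 1) * (2 * c + 1) * (a + b + c + 1) ≤ 16 * (x * y) ^ 2) :
    |P (b + c + 1) (a + c + 1) (a + b + 1)| ≤ 2 * (Real.sqrt x * Real.sqrt y) := by
  set Q : ℝ := (((2 * c + 1).factorial : ℝ) * ((2 * b + 1).factorial : ℝ) *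
      ((2 * a + 1).factorial : ℝ)) / ((2 * (a + b + c + 1) + 2).factorial : ℝ) with hQdef
  have hQ : 0 ≤ Q := by positivity
  have hsq : P (b + c + 1) (a + c + 1) (a + b + 1) ^ 2 ≤ 4 * (x : ℝ) * (y : ℝ) := by
    have e1 : P (b + c + 1) (a + c + 1) (a + b + 1) ^ 2 =
        Q * (((2 * (a + b + c + 1) + 2 : ℕ) : ℝ) * ((a + b + c + 1).factorial : ℝ)) ^ 2 /
          ((a.factorial : ℝ) * (b.factorial : ℝ) * (c.factorial : ℝ)) ^ 2 := by
      rw [P_eq, div_pow]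
      rw [show ((-1 : ℝ) ^ (c + 1) * Real.sqrt Q * ((2 * (a + b + c + 1) + 2 : ℕ) : ℝ) *
          ((a + b + c + 1).factorial : ℝ)) ^ 2 =
          ((-1 : ℝ) ^ (c + 1)) ^ 2 * Real.sqrt Q ^ 2 *
            (((2 * (a + b + c + 1) + 2 : ℕ) : ℝ) * ((a + b + c + 1).factorial : ℝ)) ^ 2
          from by ring, ← pow_mul, mul_comm (c + 1) 2, pow_mul, neg_one_sq, one_pow, one_mul,
        Real.sq_sqrt hQ]
    rw [e1, hQdef, div_mul_eq_mul_div, div_div, div_le_iff₀ (by positivity)]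
    have key := core_nat a b c x y h
    have key' : ((2 * c + 1).factorial * (2 * b + 1).factorial * (2 * a + 1).factorial *
        ((2 * (a + b + c + 1) + 2) * (a + b + c + 1).factorial) ^ 2 : ℝ)
        ≤ (4 * (x * y) *
          ((2 * (a + b + c + 1) + 2).factorial *
            (a.factorial * b.factorial * c.factorial) ^ 2) : ℝ) := by exact_mod_cast key
    refine le_trans (le_of_eq ?_) (le_trans key' (le_of_eq ?_)) <;> push_cast <;> ring
  calc |P (b + c + 1) (a + c + 1) (a + b + 1)|
      = Real.sqrt (P (b + c + 1) (a + c + 1) (a + b + 1) ^ 2) := (Real.sqrt_sq_eq_abs _).symm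
    _ ≤ Real.sqrt (4 * (x : ℝ) * (y : ℝ)) := Real.sqrt_le_sqrt hsq
    _ = 2 * (Real.sqrt x * Real.sqrt y) := by
        rw [show (4 : ℝ) * x * y = (2 * (Real.sqrt x * Real.sqrt y)) ^ 2 from by
          rw [mul_pow, mul_pow, Real.sq_sqrt (Nat.cast_nonneg x),
            Real.sq_sqrt (Nat.cast_nonneg y)]; ring]
        exact Real.sqrt_sq (by positivity)

lemma poly_bound (a b c : ℕ) :
    (2 * a + 1) * (2 * b + 1) * (2 * c + 1) * (a + b + c + 1)
      ≤ 16 * ((b + c + 1) * (a + c + 1)) ^ 2 := by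
  have h1 : 2 * a + 1 ≤ 2 * (a + c + 1) := by omega
  have h2 : 2 * b + 1 ≤ 2 * (b + c + 1) := by omega
  have h3 : (2 * c + 1) * (a + b + c + 1) ≤ 4 * ((a + c + 1) * (b + c + 1)) := by nlinarith
  calc (2 * a + 1) * (2 * b + 1) * (2 * c + 1) * (a + b + c + 1)
      = ((2 * a + 1) * (2 * b + 1)) * ((2 * c + 1) * (a + b + c + 1)) := by ring
    _ ≤ (2 * (a + c + 1) * (2 * (b + c + 1))) * (4 * ((a + c + 1) * (b + c + 1))) :=
        Nat.mul_le_mul (Nat.mul_le_mul h1 h2) h3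
    _ = 16 * ((b + c + 1) * (a + c + 1)) ^ 2 := by ring

/-- There is a constant `C > 0` such that for all positive integers `ℓ, ℓ', l̄` satisfying
the triangle inequalities with `L := ℓ+ℓ'+l̄` odd,
`|P(ℓ, ℓ', l̄)| ≤ C · min{√ℓ√ℓ', √ℓ√l̄, √ℓ'√l̄}`. -/
theorem P_bound : ∃ C : ℝ, 0 < C ∧ ∀ l l' lb : ℕ, 0 < l → 0 < l' → 0 < lb →
    l ≤ l' + lb → l' ≤ l + lb → lb ≤ l + l' → Odd (l + l' + lb) →
    |P l l' lb| ≤ C * min (Real.sqrt l * Real.sqrt l')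
      (min (Real.sqrt l * Real.sqrt lb) (Real.sqrt l' * Real.sqrt lb)) := by
  refine ⟨2, by norm_num, fun l l' lb hl hl' hlb h1 h2 h3 hodd => ?_⟩
  obtain ⟨m, hm⟩ := hodd
  obtain ⟨a, b, c, ha, hb, hc⟩ : ∃ a b c : ℕ, l = b + c + 1 ∧ l' = a + c + 1 ∧ lb = a + b + 1 :=
    ⟨m - l, m - l', m - lb, by omega, by omega, by omega⟩
  subst ha hb hc
  have B1 : |P (b + c + 1) (a + c + 1) (a + b + 1)| ≤
      2 * (Real.sqrt (b + c + 1 : ℕ) * Real.sqrt (a + c + 1 : ℕ)) :=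
    P_abs_le a b c _ _ (poly_bound a b c)
  have B2 : |P (b + c + 1) (a + c + 1) (a + b + 1)| ≤
      2 * (Real.sqrt (b + c + 1 : ℕ) * Real.sqrt (a + b + 1 : ℕ)) := by
    refine P_abs_le a b c _ _ ?_
    have := poly_bound a c b
    calc (2 * a + 1) * (2 * b + 1) * (2 * c + 1) * (a + b + c + 1)
        = (2 * a + 1) * (2 * c + 1) * (2 * b + 1) * (a + c + b + 1) := by ring
      _ ≤ 16 * ((c + b + 1) * (a + b + 1)) ^ 2 := this
      _ = 16 * ((b + c + 1) * (a + b + 1)) ^ 2 := by ring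
  have B3 : |P (b + c + 1) (a + c + 1) (a + b + 1)| ≤
      2 * (Real.sqrt (a + c + 1 : ℕ) * Real.sqrt (a + b + 1 : ℕ)) := by
    refine P_abs_le a b c _ _ ?_
    have := poly_bound b c a
    calc (2 * a + 1) * (2 * b + 1) * (2 * c + 1) * (a + b + c + 1)
        = (2 * b + 1) * (2 * c + 1) * (2 * a + 1) * (b + c + a + 1) := by ring
      _ ≤ 16 * ((c + a + 1) * (b + a + 1)) ^ 2 := this
      _ = 16 * ((a + c + 1) * (a + b + 1)) ^ 2 := by ring
  rw [mul_min_of_nonneg _ _ (by norm_num : (0:ℝ) ≤ 2),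
    mul_min_of_nonneg _ _ (by norm_num : (0:ℝ) ≤ 2)]
  exact le_min B1 (le_min B2 B3)
end

section
/- There exists a constant C > 0 such that for all positive integers ℓ, ℓ', l̄ satisfying the triangle inequalities ℓ ≤ ℓ' + l̄, ℓ' ≤ ℓ + l̄, l̄ ≤ ℓ + ℓ' and such that L := ℓ + ℓ' + l̄ is odd, it holds |P(ℓ, ℓ', l̄)| ≤ C · (L · L₁ · L₂ · L₃)^{1/4}, where L₁ := L - 2ℓ, L₂ := L - 2ℓ', L₃ := L - 2l̄. -/
lemma cb_sq_mul_le (n : ℕ) : n.centralBinom ^ 2 * (n + 1) ≤ 16 ^ n := by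
  induction n with
  | zero => simp [Nat.centralBinom]
  | succ n ih =>
    have key := Nat.succ_mul_centralBinom_succ n
    have hpos : 0 < (n+1)^3 := by positivity
    refine Nat.le_of_mul_le_mul_left ?_ hpos
    calc (n+1)^3 * (Nat.centralBinom (n+1)^2 * (n+1+1))
        = ((n+1) * Nat.centralBinom (n+1))^2 * ((n+2)*(n+1)) := by ring
      _ = (2*(2*n+1)*Nat.centralBinom n)^2 * ((n+2)*(n+1)) := by rw [key]
      _ = (4*(2*n+1)^2*(n+2)) * (Nat.centralBinom n ^2 * (n+1)) := by ring
      _ ≤ (4*(2*n+1)^2*(n+2)) * 16^n := Nat.mul_le_mul_left _ ih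
      _ ≤ (16*(n+1)^3) * 16^n := Nat.mul_le_mul_right _ (by nlinarith)
      _ = (n+1)^3 * 16^(n+1) := by ring

lemma pow_le_cb_sq (m : ℕ) (hm : 1 ≤ m) : 16 ^ m ≤ 4 * m * Nat.centralBinom m ^ 2 := by
  induction m with
  | zero => omega
  | succ m ih =>
    rcases Nat.eq_or_lt_of_le hm with h | h
    · simp [← h]
      simp [Nat.centralBinom, Nat.choose]
    · have hm1 : 1 ≤ m := by omega
      have ih := ih hm1
      have key := Nat.succ_mul_centralBinom_succ m
      have hpos : 0 < m * (m+1)^2 := by positivity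
      refine Nat.le_of_mul_le_mul_left ?_ hpos
      calc m * (m+1)^2 * 16^(m+1)
          = (16 * m * (m+1)^2) * 16^m := by ring
        _ ≤ (16 * m * (m+1)^2) * (4 * m * Nat.centralBinom m ^2) := Nat.mul_le_mul_left _ ih
        _ = (64 * m^2 * (m+1)^2) * Nat.centralBinom m ^ 2 := by ring
        _ ≤ (16 * m * (m+1) * (2*m+1)^2) * Nat.centralBinom m ^ 2 := by
            apply Nat.mul_le_mul_right
            nlinarith
        _ = (4 * m * (m+1)) * ((2*(2*m+1)*Nat.centralBinom m)^2) := by ring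
        _ = (4 * m * (m+1)) * (((m+1) * Nat.centralBinom (m+1))^2) := by rw [key]
        _ = m * (m+1)^2 * (4 * (m+1) * Nat.centralBinom (m+1)^2) := by ring

lemma key_ineq (A B C : ℕ) :
    ((2*A+1)*(2*B+1)*(2*C+1) * (Nat.centralBinom A * Nat.centralBinom B * Nat.centralBinom C))^2
      ≤ (2*(A+B+C)+3) * ((2*A+1)*(2*B+1)*(2*C+1)) * Nat.centralBinom (A+B+C+2) ^ 2 := by
  have hpos : 0 < (A+1)*(B+1)*(C+1)*(4*(A+B+C+2)) := by positivity
  refine Nat.le_of_mul_le_mul_right ?_ hpos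
  calc ((2*A+1)*(2*B+1)*(2*C+1) * (Nat.centralBinom A * Nat.centralBinom B * Nat.centralBinom C))^2
          * ((A+1)*(B+1)*(C+1)*(4*(A+B+C+2)))
      = ((2*A+1)^2*(2*B+1)^2*(2*C+1)^2)
          * ((Nat.centralBinom A^2*(A+1)) * (Nat.centralBinom B^2*(B+1)) * (Nat.centralBinom C^2*(C+1)))
          * (4*(A+B+C+2)) := by ring
    _ ≤ ((2*A+1)^2*(2*B+1)^2*(2*C+1)^2) * (16^A * 16^B * 16^C) * (4*(A+B+C+2)) := by
        gcongr <;> exact cb_sq_mul_le _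
    _ = ((2*A+1)*(2*B+1)*(2*C+1)) * (((2*A+1)*(2*B+1)*(2*C+1)) * (4*(A+B+C+2))) * 16^(A+B+C) := by
        rw [pow_add, pow_add]; ring
    _ ≤ ((2*A+1)*(2*B+1)*(2*C+1)) * (((2*(A+1))*(2*(B+1))*(2*(C+1))) * (32*(2*(A+B+C)+3)))
          * 16^(A+B+C) := by gcongr <;> omega
    _ = ((2*(A+B+C)+3) * ((2*A+1)*(2*B+1)*(2*C+1)) * ((A+1)*(B+1)*(C+1))) * 16^(A+B+C+2) := by
        have h16 : (16:ℕ)^(A+B+C+2) = 256 * 16^(A+B+C) := by rw [pow_add]; norm_num [mul_comm]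
        rw [h16]; ring
    _ ≤ ((2*(A+B+C)+3) * ((2*A+1)*(2*B+1)*(2*C+1)) * ((A+1)*(B+1)*(C+1)))
          * (4*(A+B+C+2) * Nat.centralBinom (A+B+C+2)^2) := by
        gcongr
        exact pow_le_cb_sq _ (by omega)
    _ = (2*(A+B+C)+3) * ((2*A+1)*(2*B+1)*(2*C+1)) * Nat.centralBinom (A+B+C+2) ^ 2
          * ((A+1)*(B+1)*(C+1)*(4*(A+B+C+2))) := by ring

lemma fact_even (n : ℕ) : (2*n).factorial = Nat.centralBinom n * n.factorial^2 := by
  have h := Nat.choose_mul_factorial_mul_factorial (show n ≤ 2*n by omega)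
  rw [show 2*n - n = n from by omega] at h
  rw [← h, Nat.centralBinom]; ring

lemma fact_odd_s6 (n : ℕ) : (2*n+1).factorial
    = (2*n+1) * (Nat.centralBinom n * n.factorial^2) := by
  rw [← fact_even, Nat.factorial_succ]

lemma real_key (A B C : ℕ) :
    ((2*A+1)*(2*B+1)*(2*C+1) : ℝ)
        * ((Nat.centralBinom A : ℝ) * Nat.centralBinom B * Nat.centralBinom C) * 4
        / (Nat.centralBinom (A+B+C+2) : ℝ)
      ≤ 4 * Real.sqrt ((((2*(A+B+C)+3) * ((2*A+1)*(2*B+1)*(2*C+1)) : ℕ) : ℝ)) := by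
  have hm : (0:ℝ) < (Nat.centralBinom (A+B+C+2) : ℝ) := by
    exact_mod_cast Nat.centralBinom_pos _
  rw [div_le_iff₀ hm]
  have hk : ((((2*A+1)*(2*B+1)*(2*C+1)
      * (Nat.centralBinom A * Nat.centralBinom B * Nat.centralBinom C) : ℕ)) : ℝ)^2
      ≤ ((((2*(A+B+C)+3) * ((2*A+1)*(2*B+1)*(2*C+1)) : ℕ)) : ℝ)
        * ((Nat.centralBinom (A+B+C+2) : ℝ))^2 := by
    push_cast
    exact_mod_cast key_ineq A B C
  have hX : ((((2*A+1)*(2*B+1)*(2*C+1)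
      * (Nat.centralBinom A * Nat.centralBinom B * Nat.centralBinom C) : ℕ)) : ℝ)
      ≤ Real.sqrt ((((2*(A+B+C)+3) * ((2*A+1)*(2*B+1)*(2*C+1)) : ℕ)) : ℝ)
        * (Nat.centralBinom (A+B+C+2) : ℝ) := by
    have h1 : ((((2*A+1)*(2*B+1)*(2*C+1)
        * (Nat.centralBinom A * Nat.centralBinom B * Nat.centralBinom C) : ℕ)) : ℝ)
        = Real.sqrt ((((2*A+1)*(2*B+1)*(2*C+1)
        * (Nat.centralBinom A * Nat.centralBinom B * Nat.centralBinom C) : ℕ) : ℝ)^2) :=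
      (Real.sqrt_sq (by positivity)).symm
    rw [h1]
    calc Real.sqrt _ ≤ Real.sqrt (((((2*(A+B+C)+3) * ((2*A+1)*(2*B+1)*(2*C+1)) : ℕ)) : ℝ)
          * ((Nat.centralBinom (A+B+C+2) : ℝ))^2) := Real.sqrt_le_sqrt hk
      _ = _ := by
          rw [Real.sqrt_mul (by positivity), Real.sqrt_sq (by positivity)]
  calc ((2*A+1)*(2*B+1)*(2*C+1) : ℝ)
        * ((Nat.centralBinom A : ℝ) * Nat.centralBinom B * Nat.centralBinom C) * 4
      = 4 * ((((2*A+1)*(2*B+1)*(2*C+1)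
          * (Nat.centralBinom A * Nat.centralBinom B * Nat.centralBinom C) : ℕ)) : ℝ) := by
        push_cast; ring
    _ ≤ 4 * (Real.sqrt ((((2*(A+B+C)+3) * ((2*A+1)*(2*B+1)*(2*C+1)) : ℕ)) : ℝ)
          * (Nat.centralBinom (A+B+C+2) : ℝ)) := by linarith
    _ = 4 * Real.sqrt ((((2*(A+B+C)+3) * ((2*A+1)*(2*B+1)*(2*C+1)) : ℕ)) : ℝ)
          * (Nat.centralBinom (A+B+C+2) : ℝ) := by ring

lemma main_bound (A B C : ℕ) :
    |P (A+B+1) (A+C+1) (B+C+1)|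
      ≤ 2 * ((((2*(A+B+C)+3) * ((2*A+1)*(2*B+1)*(2*C+1)) : ℕ)) : ℝ) ^ ((1:ℝ)/4) := by
  have e1 : (A+B+1) + (A+C+1) - (B+C+1) = 2*A+1 := by omega
  have e2 : (A+B+1) + (B+C+1) - (A+C+1) = 2*B+1 := by omega
  have e3 : (A+C+1) + (B+C+1) - (A+B+1) = 2*C+1 := by omega
  have e4 : (A+B+1) + (A+C+1) + (B+C+1) = 2*(A+B+C)+3 := by omega
  have f1 : (2*A+1+1)/2 = A+1 := by omega
  have f2 : (2*A+1-1)/2 = A := by omega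
  have f3 : (2*B+1-1)/2 = B := by omega
  have f4 : (2*C+1-1)/2 = C := by omega
  have f5 : (2*(A+B+C)+3-1)/2 = A+B+C+1 := by omega
  have f6 : 2*(A+B+C)+3+1 = 2*(A+B+C+2) := by omega
  rw [P, Δ, e1, e2, e3, e4, f1, f2, f3, f4, f5, f6]
  have ec : ((A+B+1 : ℕ) : ℝ) + ((A+C+1 : ℕ) : ℝ) + ((B+C+1 : ℕ) : ℝ) + 1
      = ((2*(A+B+C+2) : ℕ) : ℝ) := by push_cast; ring
  rw [ec]
  set D : ℝ := (((2*A+1).factorial : ℝ) * ((2*B+1).factorial : ℝ) * ((2*C+1).factorial : ℝ))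
      / ((2*(A+B+C+2)).factorial : ℝ) with hD
  have hD0 : (0:ℝ) ≤ D := by positivity
  have habs : |(-1 : ℝ) ^ (A+1) * Real.sqrt D * ((2*(A+B+C+2) : ℕ) : ℝ)
        * ((A+B+C+1).factorial : ℝ)
        / (((C.factorial : ℝ)) * ((B.factorial : ℝ)) * ((A.factorial : ℝ)))|
      = Real.sqrt D * ((2*(A+B+C+2) : ℕ) : ℝ) * ((A+B+C+1).factorial : ℝ)
        / (((C.factorial : ℝ)) * ((B.factorial : ℝ)) * ((A.factorial : ℝ))) := by
    rw [abs_div, abs_mul, abs_mul, abs_mul, abs_pow, abs_neg, abs_one, one_pow, one_mul,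
      abs_of_nonneg (Real.sqrt_nonneg _), abs_of_nonneg (by positivity : (0:ℝ) ≤ ((2*(A+B+C+2) : ℕ) : ℝ)),
      abs_of_nonneg (by positivity : (0:ℝ) ≤ ((A+B+C+1).factorial : ℝ)),
      abs_of_nonneg (by positivity : (0:ℝ) ≤ ((C.factorial : ℝ)) * ((B.factorial : ℝ)) * ((A.factorial : ℝ)))]
  rw [habs]
  set E : ℝ := Real.sqrt D * ((2*(A+B+C+2) : ℕ) : ℝ) * ((A+B+C+1).factorial : ℝ)
      / (((C.factorial : ℝ)) * ((B.factorial : ℝ)) * ((A.factorial : ℝ))) with hE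
  have hE0 : (0:ℝ) ≤ E := by positivity
  have hfA : ((A.factorial : ℝ)) ≠ 0 := by exact_mod_cast A.factorial_pos.ne'
  have hfB : ((B.factorial : ℝ)) ≠ 0 := by exact_mod_cast B.factorial_pos.ne'
  have hfC : ((C.factorial : ℝ)) ≠ 0 := by exact_mod_cast C.factorial_pos.ne'
  have hfm : (((A+B+C+1).factorial : ℝ)) ≠ 0 := by exact_mod_cast (A+B+C+1).factorial_pos.ne'
  have hcm : ((Nat.centralBinom (A+B+C+2) : ℝ)) ≠ 0 := by
    exact_mod_cast (Nat.centralBinom_pos (A+B+C+2)).ne'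
  have hE2 : E^2 = ((2*A+1)*(2*B+1)*(2*C+1) : ℝ)
      * ((Nat.centralBinom A : ℝ) * Nat.centralBinom B * Nat.centralBinom C) * 4
      / (Nat.centralBinom (A+B+C+2) : ℝ) := by
    rw [hE, div_pow, mul_pow, mul_pow, Real.sq_sqrt hD0, hD,
      fact_odd_s6 A, fact_odd_s6 B, fact_odd_s6 C, fact_even (A+B+C+2),
      show A+B+C+2 = (A+B+C+1)+1 by ring, Nat.factorial_succ]
    push_cast
    field_simp
    ring
  calc E = Real.sqrt (E^2) := (Real.sqrt_sq hE0).symm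
    _ ≤ Real.sqrt (4 * Real.sqrt ((((2*(A+B+C)+3) * ((2*A+1)*(2*B+1)*(2*C+1)) : ℕ)) : ℝ)) := by
        apply Real.sqrt_le_sqrt
        rw [hE2]; exact real_key A B C
    _ = 2 * Real.sqrt (Real.sqrt ((((2*(A+B+C)+3) * ((2*A+1)*(2*B+1)*(2*C+1)) : ℕ)) : ℝ)) := by
        rw [show (4:ℝ) = 2^2 by norm_num, Real.sqrt_mul (by positivity), Real.sqrt_sq (by norm_num)]
    _ = 2 * ((((2*(A+B+C)+3) * ((2*A+1)*(2*B+1)*(2*C+1)) : ℕ)) : ℝ) ^ ((1:ℝ)/4) := by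
        rw [Real.sqrt_eq_rpow, Real.sqrt_eq_rpow, ← Real.rpow_mul (Nat.cast_nonneg _)]
        norm_num

/-- Stirling-approximation bound: there is a constant `C > 0` such that for all positive
integers `ℓ, ℓ', l̄` satisfying the triangle inequalities with `L := ℓ+ℓ'+l̄` odd,
`|P(ℓ, ℓ', l̄)| ≤ C · (L·L₁·L₂·L₃)^{1/4}` where `L₁ = L-2ℓ`, `L₂ = L-2ℓ'`, `L₃ = L-2l̄`. -/
theorem P_bound_quarter_power : ∃ C : ℝ, 0 < C ∧ ∀ l l' lb : ℕ, 0 < l → 0 < l' → 0 < lb →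
    l ≤ l' + lb → l' ≤ l + lb → lb ≤ l + l' → Odd (l + l' + lb) →
    |P l l' lb| ≤ C * (((l + l' + lb) * (l + l' + lb - 2 * l) * (l + l' + lb - 2 * l') *
      (l + l' + lb - 2 * lb) : ℕ) : ℝ) ^ ((1 : ℝ) / 4) := by
  refine ⟨2, by norm_num, ?_⟩
  intro l l' lb hl hl' hlb h1 h2 h3 hodd
  obtain ⟨k, hk⟩ := hodd
  obtain ⟨A, B, C, rfl, rfl, rfl⟩ : ∃ A B C, l = A+B+1 ∧ l' = A+C+1 ∧ lb = B+C+1 :=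
    ⟨(l+l'-lb)/2, (l+lb-l')/2, (l'+lb-l)/2, by omega, by omega, by omega⟩
  have g1 : (A+B+1) + (A+C+1) + (B+C+1) = 2*(A+B+C)+3 := by omega
  have g2 : (A+B+1) + (A+C+1) + (B+C+1) - 2*(A+B+1) = 2*C+1 := by omega
  have g3 : (A+B+1) + (A+C+1) + (B+C+1) - 2*(A+C+1) = 2*B+1 := by omega
  have g4 : (A+B+1) + (A+C+1) + (B+C+1) - 2*(B+C+1) = 2*A+1 := by omega
  have gN : ((A+B+1) + (A+C+1) + (B+C+1)) * ((A+B+1) + (A+C+1) + (B+C+1) - 2*(A+B+1))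
      * ((A+B+1) + (A+C+1) + (B+C+1) - 2*(A+C+1))
      * ((A+B+1) + (A+C+1) + (B+C+1) - 2*(B+C+1))
      = (2*(A+B+C)+3) * ((2*A+1)*(2*B+1)*(2*C+1)) := by
    rw [g1, show 2*(A+B+C)+3 - 2*(A+B+1) = 2*C+1 from by omega,
      show 2*(A+B+C)+3 - 2*(A+C+1) = 2*B+1 from by omega,
      show 2*(A+B+C)+3 - 2*(B+C+1) = 2*A+1 from by omega]
    ring
  rw [gN]
  exact main_bound A B C
end

section
/- There exists a constant C > 0 such that for all positive integers l̄, ℓ, ℓ' with ℓ ≥ 2·l̄·(log(l̄) + 1) (natural logarithm) and |l̄ - ℓ| + 1 ≤ ℓ' ≤ l̄ + ℓ, it holds ( 1/(ℓ(ℓ+1)) - 1/(ℓ'(ℓ'+1)) )² ≤ C · (ℓ²·l̄² + l̄⁴) / (ℓ⁴·(ℓ+1)⁴). -/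
set_option maxHeartbeats 1000000

/-- Eigenvalue-gap estimate in the regime `ℓ ≫ l̄`: there is `C > 0` such that for all
positive integers `l̄, ℓ, ℓ'` with `ℓ ≥ 2·l̄·(log(l̄)+1)` and `|l̄-ℓ|+1 ≤ ℓ' ≤ l̄+ℓ`,
`(1/(ℓ(ℓ+1)) - 1/(ℓ'(ℓ'+1)))² ≤ C·(ℓ²l̄² + l̄⁴)/(ℓ⁴(ℓ+1)⁴)`. -/
theorem eigenvalue_gap_estimate : ∃ C : ℝ, 0 < C ∧
    ∀ lb l l' : ℕ, 0 < lb → 0 < l → 0 < l' →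
    2 * (lb : ℝ) * (Real.log lb + 1) ≤ (l : ℝ) →
    |(lb : ℤ) - (l : ℤ)| + 1 ≤ (l' : ℤ) → (l' : ℤ) ≤ (lb : ℤ) + (l : ℤ) →
    (1 / ((l : ℝ) * ((l : ℝ) + 1)) - 1 / ((l' : ℝ) * ((l' : ℝ) + 1))) ^ 2 ≤
      C * ((l : ℝ) ^ 2 * (lb : ℝ) ^ 2 + (lb : ℝ) ^ 4) / ((l : ℝ) ^ 4 * ((l : ℝ) + 1) ^ 4) := by
  refine ⟨1024, by norm_num, ?_⟩
  intro lb l l' hlb hl hl' hlog h1 h2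
  have hb1 : (1:ℝ) ≤ (lb:ℝ) := Nat.one_le_cast.mpr hlb
  have ha2b : 2 * (lb:ℝ) ≤ (l:ℝ) := by
    have := Real.log_nonneg hb1
    nlinarith
  set a : ℝ := (l : ℝ) with ha
  set b : ℝ := (lb : ℝ) with hb
  set c : ℝ := (l' : ℝ) with hc
  have ha1 : (1:ℝ) ≤ a := by linarith
  have hlble : (lb : ℤ) ≤ (l : ℤ) := by
    have hba : b ≤ a := by linarith
    rw [ha, hb] at hba
    exact_mod_cast hba
  have habs : |(lb : ℤ) - (l : ℤ)| = (l : ℤ) - (lb : ℤ) := by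
    rw [abs_sub_comm]; exact abs_of_nonneg (by omega)
  have hc_lb : a - b + 1 ≤ c := by
    rw [habs] at h1
    have : ((l:ℤ) - (lb:ℤ) + 1 : ℤ) ≤ (l' : ℤ) := h1
    rw [ha, hb, hc]
    exact_mod_cast this
  have hc_ub : c ≤ b + a := by
    rw [ha, hb, hc]; exact_mod_cast h2
  have hcpos : (0:ℝ) < c := by positivity
  have hapos : (0:ℝ) < a := by linarith
  have hD1 : (0:ℝ) < a * (a + 1) := by positivity
  have hD2 : (0:ℝ) < c * (c + 1) := by positivity
  have hdiff : 1 / (a * (a + 1)) - 1 / (c * (c + 1)) =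
      (c * (c + 1) - a * (a + 1)) / ((a * (a + 1)) * (c * (c + 1))) := by
    field_simp
  rw [hdiff, div_pow]
  have hca1 : (c - a) ^ 2 ≤ b ^ 2 := by nlinarith
  have hca2 : (c + a + 1) ^ 2 ≤ 16 * a ^ 2 := by nlinarith
  have hN : (c * (c + 1) - a * (a + 1)) ^ 2 ≤ 16 * a ^ 2 * b ^ 2 := by
    have heq : (c * (c + 1) - a * (a + 1)) ^ 2 = (c - a) ^ 2 * (c + a + 1) ^ 2 := by ring
    rw [heq]
    calc (c - a) ^ 2 * (c + a + 1) ^ 2 ≤ b ^ 2 * (16 * a ^ 2) :=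
          mul_le_mul hca1 hca2 (by positivity) (by positivity)
      _ = 16 * a ^ 2 * b ^ 2 := by ring
  have hD2lb : a ^ 2 / 4 ≤ c * (c + 1) := by nlinarith
  have hD2sq : (a ^ 2 / 4) ^ 2 ≤ (c * (c + 1)) ^ 2 :=
    pow_le_pow_left₀ (by positivity) hD2lb 2
  have h1' : a ^ 2 * (a + 1) ^ 2 * (a ^ 2 / 4) ^ 2 ≤ ((a * (a + 1)) * (c * (c + 1))) ^ 2 := by
    have : ((a * (a + 1)) * (c * (c + 1))) ^ 2 = a ^ 2 * (a + 1) ^ 2 * (c * (c + 1)) ^ 2 := by ring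
    rw [this]
    exact mul_le_mul_of_nonneg_left hD2sq (by positivity)
  have step1 : (c * (c + 1) - a * (a + 1)) ^ 2 / ((a * (a + 1)) * (c * (c + 1))) ^ 2 ≤
      256 * b ^ 2 / (a ^ 4 * (a + 1) ^ 2) := by
    rw [div_le_div_iff₀ (by positivity) (by positivity)]
    calc (c * (c + 1) - a * (a + 1)) ^ 2 * (a ^ 4 * (a + 1) ^ 2)
        ≤ 16 * a ^ 2 * b ^ 2 * (a ^ 4 * (a + 1) ^ 2) :=
          mul_le_mul_of_nonneg_right hN (by positivity)
      _ = 256 * b ^ 2 * (a ^ 2 * (a + 1) ^ 2 * (a ^ 2 / 4) ^ 2) := by ring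
      _ ≤ 256 * b ^ 2 * ((a * (a + 1)) * (c * (c + 1))) ^ 2 :=
          mul_le_mul_of_nonneg_left h1' (by positivity)
  have step2 : 256 * b ^ 2 / (a ^ 4 * (a + 1) ^ 2) ≤
      1024 * (a ^ 2 * b ^ 2 + b ^ 4) / (a ^ 4 * (a + 1) ^ 4) := by
    rw [div_le_div_iff₀ (by positivity) (by positivity)]
    have h2a : (a + 1) ^ 2 ≤ 4 * a ^ 2 := by nlinarith
    calc 256 * b ^ 2 * (a ^ 4 * (a + 1) ^ 4)
        = 256 * b ^ 2 * a ^ 4 * (a + 1) ^ 2 * (a + 1) ^ 2 := by ring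
      _ ≤ 256 * b ^ 2 * a ^ 4 * (a + 1) ^ 2 * (4 * a ^ 2) :=
          mul_le_mul_of_nonneg_left h2a (by positivity)
      _ = 1024 * (a ^ 2 * b ^ 2) * (a ^ 4 * (a + 1) ^ 2) := by ring
      _ ≤ 1024 * (a ^ 2 * b ^ 2 + b ^ 4) * (a ^ 4 * (a + 1) ^ 2) := by
          apply mul_le_mul_of_nonneg_right _ (by positivity)
          have : (0:ℝ) ≤ b ^ 4 := by positivity
          linarith
  linarith [step1, step2]
end

section
/- Fix a real number κ > 5/2. Define for each integer N ≥ 2 the quantity A_N(κ) := (1/N⁴) · Σ_{l̄=1}^{N-1} (2l̄+1) · (l̄(l̄+1))^{-κ} · Σ_{ℓ} (2ℓ+1) · Σ_{ℓ'=|l̄-ℓ|+1}^{min(N, l̄+ℓ)} (ℓ⁸·l̄⁴ + ℓ⁶·l̄⁶) / (ℓ⁴·(ℓ+1)⁴), where the middle sum runs over integers ℓ with 2·l̄·(log(l̄)+1) ≤ ℓ ≤ N-1 (natural logarithm). Then A_N(κ) → 0 as N → ∞. -/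
open Filter

/-- The triple sum `A_N(κ)` bounding the contribution of the regime `ℓ ≫ l̄`
(i.e. `ℓ ≥ 2l̄(log l̄ + 1)`) to `E[‖r^N(0)‖²_{H^{-κ}}]`. -/
noncomputable def A (κ : ℝ) (N : ℕ) : ℝ :=
  (1 / (N : ℝ) ^ 4) *
    ∑ lb ∈ Finset.Icc 1 (N - 1),
      (2 * (lb : ℝ) + 1) * ((lb : ℝ) * ((lb : ℝ) + 1)) ^ (-κ) *
        ∑ l ∈ (Finset.Icc 1 (N - 1)).filter
            (fun l : ℕ => 2 * (lb : ℝ) * (Real.log lb + 1) ≤ (l : ℝ)),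
          (2 * (l : ℝ) + 1) *
            ∑ _l' ∈ Finset.Icc (((lb : ℤ) - (l : ℤ)).natAbs + 1) (min N (lb + l)),
              ((l : ℝ) ^ 8 * (lb : ℝ) ^ 4 + (l : ℝ) ^ 6 * (lb : ℝ) ^ 6) /
                ((l : ℝ) ^ 4 * ((l : ℝ) + 1) ^ 4)

/-- For every `κ > 5/2`, `A_N(κ) → 0` as `N → ∞`. -/
theorem A_tendsto_zero (κ : ℝ) (hκ : 5 / 2 < κ) :
    Tendsto (fun N : ℕ => A κ N) atTop (nhds 0) := by
  set a : ℝ := max (6 - 2 * κ) 0 with ha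
  have ha0 : 0 ≤ a := le_max_right _ _
  have ha1 : a < 1 := max_lt (by linarith) one_pos
  -- nonnegativity of A
  have hnonneg : ∀ N : ℕ, 0 ≤ A κ N := by
    intro N
    unfold A
    refine mul_nonneg (by positivity) (Finset.sum_nonneg fun lb _ => ?_)
    refine mul_nonneg (mul_nonneg (by positivity) (Real.rpow_nonneg (by positivity) _))
      (Finset.sum_nonneg fun l _ => ?_)
    exact mul_nonneg (by positivity) (Finset.sum_nonneg fun _ _ => by positivity)
  -- key upper bound
  have key : ∀ N : ℕ, 2 ≤ N → A κ N ≤ 24 * (N : ℝ) ^ (a - 1) := by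
    intro N hN2
    have hN1 : (1 : ℝ) ≤ (N : ℝ) := by exact_mod_cast Nat.one_le_of_lt hN2
    have hNpos : (0 : ℝ) < N := lt_of_lt_of_le one_pos hN1
    have hmain : A κ N ≤ (1 / (N : ℝ) ^ 4) * ((N : ℝ) * (24 * (N : ℝ) ^ 2 * (N : ℝ) ^ a)) := by
      unfold A
      refine mul_le_mul_of_nonneg_left ?_ (by positivity)
      refine le_trans (Finset.sum_le_card_nsmul _ _ (24 * (N : ℝ) ^ 2 * (N : ℝ) ^ a) ?_) ?_
      · intro lb hlb
        rw [Finset.mem_Icc] at hlb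
        obtain ⟨hlb1n, hlbNn⟩ := hlb
        have hlb1 : (1 : ℝ) ≤ (lb : ℝ) := by exact_mod_cast hlb1n
        have hlbpos : (0 : ℝ) < (lb : ℝ) := lt_of_lt_of_le one_pos hlb1
        have hlbN : (lb : ℝ) ≤ (N : ℝ) := by
          exact_mod_cast le_trans hlbNn (Nat.sub_le N 1)
        -- bound the middle sum
        have hmid : (∑ l ∈ (Finset.Icc 1 (N - 1)).filter
              (fun l : ℕ => 2 * (lb : ℝ) * (Real.log lb + 1) ≤ (l : ℝ)),
            (2 * (l : ℝ) + 1) *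
              ∑ _l' ∈ Finset.Icc (((lb : ℤ) - (l : ℤ)).natAbs + 1) (min N (lb + l)),
                ((l : ℝ) ^ 8 * (lb : ℝ) ^ 4 + (l : ℝ) ^ 6 * (lb : ℝ) ^ 6) /
                  ((l : ℝ) ^ 4 * ((l : ℝ) + 1) ^ 4))
            ≤ (N : ℝ) * (2 * (N : ℝ) * (4 * (lb : ℝ) ^ 5)) := by
          refine le_trans (Finset.sum_le_card_nsmul _ _ (2 * (N : ℝ) * (4 * (lb : ℝ) ^ 5)) ?_) ?_
          · intro l hl
            simp only [Finset.mem_filter, Finset.mem_Icc] at hl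
            obtain ⟨⟨hl1n, hlNn⟩, hlog⟩ := hl
            have hl1 : (1 : ℝ) ≤ (l : ℝ) := by exact_mod_cast hl1n
            have hlpos : (0 : ℝ) < (l : ℝ) := lt_of_lt_of_le one_pos hl1
            have hlog0 : 0 ≤ Real.log lb := Real.log_nonneg hlb1
            have h2lb : 2 * (lb : ℝ) ≤ (l : ℝ) := by nlinarith
            have hlble : lb ≤ l := by
              have : (lb : ℝ) ≤ (l : ℝ) := by linarith
              exact_mod_cast this
            have hlN : (l : ℝ) ≤ (N : ℝ) := by
              exact_mod_cast le_trans hlNn (Nat.sub_le N 1)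
            -- bound the inner sum
            have hT : (∑ _l' ∈ Finset.Icc (((lb : ℤ) - (l : ℤ)).natAbs + 1) (min N (lb + l)),
                ((l : ℝ) ^ 8 * (lb : ℝ) ^ 4 + (l : ℝ) ^ 6 * (lb : ℝ) ^ 6) /
                  ((l : ℝ) ^ 4 * ((l : ℝ) + 1) ^ 4))
                ≤ 2 * (lb : ℝ) * (2 * (lb : ℝ) ^ 4) := by
              rw [Finset.sum_const, nsmul_eq_mul]
              have hcardn : (Finset.Icc (((lb : ℤ) - (l : ℤ)).natAbs + 1) (min N (lb + l))).card
                  ≤ 2 * lb := by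
                rw [Nat.card_Icc]
                omega
              have hcard : ((Finset.Icc (((lb : ℤ) - (l : ℤ)).natAbs + 1) (min N (lb + l))).card : ℝ)
                  ≤ 2 * (lb : ℝ) := by exact_mod_cast hcardn
              have hden : (0 : ℝ) < (l : ℝ) ^ 4 * ((l : ℝ) + 1) ^ 4 := by positivity
              have hc : ((l : ℝ) ^ 8 * (lb : ℝ) ^ 4 + (l : ℝ) ^ 6 * (lb : ℝ) ^ 6) /
                  ((l : ℝ) ^ 4 * ((l : ℝ) + 1) ^ 4) ≤ 2 * (lb : ℝ) ^ 4 := by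
                rw [div_le_iff₀ hden]
                have e1 : (l : ℝ) ^ 8 ≤ (l : ℝ) ^ 4 * ((l : ℝ) + 1) ^ 4 := by
                  calc (l : ℝ) ^ 8 = ((l : ℝ) * (l : ℝ)) ^ 4 := by ring
                    _ ≤ ((l : ℝ) * ((l : ℝ) + 1)) ^ 4 :=
                        pow_le_pow_left₀ (by positivity) (by nlinarith) 4
                    _ = (l : ℝ) ^ 4 * ((l : ℝ) + 1) ^ 4 := by ring
                have h4 : (2 * (lb : ℝ)) ^ 2 ≤ (l : ℝ) ^ 2 :=
                  pow_le_pow_left₀ (by positivity) h2lb 2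
                have e2 : (l : ℝ) ^ 6 * (lb : ℝ) ^ 6 ≤ (l : ℝ) ^ 8 * (lb : ℝ) ^ 4 := by
                  calc (l : ℝ) ^ 6 * (lb : ℝ) ^ 6
                      = (l : ℝ) ^ 6 * (lb : ℝ) ^ 4 / 4 * (2 * (lb : ℝ)) ^ 2 := by ring
                    _ ≤ (l : ℝ) ^ 6 * (lb : ℝ) ^ 4 / 4 * (l : ℝ) ^ 2 :=
                        mul_le_mul_of_nonneg_left h4 (by positivity)
                    _ = (l : ℝ) ^ 8 * (lb : ℝ) ^ 4 / 4 := by ring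
                    _ ≤ (l : ℝ) ^ 8 * (lb : ℝ) ^ 4 := by
                        have : (0 : ℝ) ≤ (l : ℝ) ^ 8 * (lb : ℝ) ^ 4 := by positivity
                        linarith
                have e3 := mul_le_mul_of_nonneg_left e1
                  (show (0 : ℝ) ≤ 2 * (lb : ℝ) ^ 4 by positivity)
                linarith
              exact mul_le_mul hcard hc (by positivity) (by positivity)
            have h2l1 : 2 * (l : ℝ) + 1 ≤ 2 * (N : ℝ) := by
              have hlN1 : l + 1 ≤ N := by omega
              have : ((l : ℝ) + 1) ≤ (N : ℝ) := by exact_mod_cast hlN1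
              linarith
            have hT0 : (0 : ℝ) ≤ ∑ _l' ∈ Finset.Icc (((lb : ℤ) - (l : ℤ)).natAbs + 1)
                (min N (lb + l)),
                ((l : ℝ) ^ 8 * (lb : ℝ) ^ 4 + (l : ℝ) ^ 6 * (lb : ℝ) ^ 6) /
                  ((l : ℝ) ^ 4 * ((l : ℝ) + 1) ^ 4) :=
              Finset.sum_nonneg fun _ _ => by positivity
            calc (2 * (l : ℝ) + 1) * _ ≤ 2 * (N : ℝ) * (2 * (lb : ℝ) * (2 * (lb : ℝ) ^ 4)) :=
                  mul_le_mul h2l1 hT hT0 (by positivity)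
              _ = 2 * (N : ℝ) * (4 * (lb : ℝ) ^ 5) := by ring
          · rw [nsmul_eq_mul]
            refine mul_le_mul_of_nonneg_right ?_ (by positivity)
            have h1 : ((Finset.Icc 1 (N - 1)).filter
                (fun l : ℕ => 2 * (lb : ℝ) * (Real.log lb + 1) ≤ (l : ℝ))).card ≤ N :=
              le_trans (Finset.card_filter_le _ _) (by rw [Nat.card_Icc]; omega)
            exact_mod_cast h1
        -- combine for the outer term
        have hS0 : (0 : ℝ) ≤ ∑ l ∈ (Finset.Icc 1 (N - 1)).filter
              (fun l : ℕ => 2 * (lb : ℝ) * (Real.log lb + 1) ≤ (l : ℝ)),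
            (2 * (l : ℝ) + 1) *
              ∑ _l' ∈ Finset.Icc (((lb : ℤ) - (l : ℤ)).natAbs + 1) (min N (lb + l)),
                ((l : ℝ) ^ 8 * (lb : ℝ) ^ 4 + (l : ℝ) ^ 6 * (lb : ℝ) ^ 6) /
                  ((l : ℝ) ^ 4 * ((l : ℝ) + 1) ^ 4) :=
          Finset.sum_nonneg fun l _ =>
            mul_nonneg (by positivity) (Finset.sum_nonneg fun _ _ => by positivity)
        have hrp : ((lb : ℝ) * ((lb : ℝ) + 1)) ^ (-κ) ≤ (lb : ℝ) ^ (-(2 * κ)) := by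
          have h1 : (lb : ℝ) ^ (-(2 * κ)) = ((lb : ℝ) ^ (2 : ℕ)) ^ (-κ) := by
            rw [← Real.rpow_natCast (lb : ℝ) 2, ← Real.rpow_mul hlbpos.le]
            congr 1
            push_cast
            ring
          rw [h1]
          refine Real.rpow_le_rpow_of_nonpos (by positivity) (by nlinarith) (by linarith)
        have hX : 2 * (lb : ℝ) + 1 ≤ 3 * (lb : ℝ) := by linarith
        have step1 : (2 * (lb : ℝ) + 1) * ((lb : ℝ) * ((lb : ℝ) + 1)) ^ (-κ) *
            (∑ l ∈ (Finset.Icc 1 (N - 1)).filter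
              (fun l : ℕ => 2 * (lb : ℝ) * (Real.log lb + 1) ≤ (l : ℝ)),
            (2 * (l : ℝ) + 1) *
              ∑ _l' ∈ Finset.Icc (((lb : ℤ) - (l : ℤ)).natAbs + 1) (min N (lb + l)),
                ((l : ℝ) ^ 8 * (lb : ℝ) ^ 4 + (l : ℝ) ^ 6 * (lb : ℝ) ^ 6) /
                  ((l : ℝ) ^ 4 * ((l : ℝ) + 1) ^ 4))
            ≤ 3 * (lb : ℝ) * (lb : ℝ) ^ (-(2 * κ)) *
              ((N : ℝ) * (2 * (N : ℝ) * (4 * (lb : ℝ) ^ 5))) := by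
          refine mul_le_mul ?_ hmid hS0 (by positivity)
          exact mul_le_mul hX hrp (Real.rpow_nonneg (by positivity) _) (by positivity)
        refine le_trans step1 ?_
        have hsplit : 3 * (lb : ℝ) * (lb : ℝ) ^ (-(2 * κ)) *
            ((N : ℝ) * (2 * (N : ℝ) * (4 * (lb : ℝ) ^ 5)))
            = 24 * (N : ℝ) ^ 2 * ((lb : ℝ) ^ (6 : ℕ) * (lb : ℝ) ^ (-(2 * κ))) := by ring
        rw [hsplit]
        refine mul_le_mul_of_nonneg_left ?_ (by positivity)
        have hmerge : (lb : ℝ) ^ (6 : ℕ) * (lb : ℝ) ^ (-(2 * κ)) = (lb : ℝ) ^ (6 - 2 * κ) := by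
          rw [← Real.rpow_natCast (lb : ℝ) 6, ← Real.rpow_add hlbpos]
          norm_num
          ring_nf
        rw [hmerge]
        calc (lb : ℝ) ^ (6 - 2 * κ) ≤ (lb : ℝ) ^ a :=
              Real.rpow_le_rpow_of_exponent_le hlb1 (le_max_left _ _)
          _ ≤ (N : ℝ) ^ a := Real.rpow_le_rpow hlbpos.le hlbN ha0
      · rw [nsmul_eq_mul]
        refine mul_le_mul_of_nonneg_right ?_ (by positivity)
        have h1 : (Finset.Icc 1 (N - 1)).card ≤ N := by rw [Nat.card_Icc]; omega
        exact_mod_cast h1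
    refine le_trans hmain (le_of_eq ?_)
    have hne : (N : ℝ) ≠ 0 := ne_of_gt hNpos
    rw [Real.rpow_sub hNpos, Real.rpow_one]
    field_simp
  -- squeeze
  have hlim : Tendsto (fun N : ℕ => 24 * (N : ℝ) ^ (a - 1)) atTop (nhds 0) := by
    have h1 : Tendsto (fun x : ℝ => x ^ (-(1 - a))) atTop (nhds 0) :=
      tendsto_rpow_neg_atTop (by linarith)
    have h2 : Tendsto (fun N : ℕ => ((N : ℝ)) ^ (a - 1)) atTop (nhds 0) := by
      have := h1.comp tendsto_natCast_atTop_atTop (f := fun N : ℕ => (N : ℝ))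
      simpa [Function.comp_def, neg_sub] using this
    simpa using h2.const_mul 24
  refine squeeze_zero' ?_ ?_ hlim
  · exact Eventually.of_forall hnonneg
  · filter_upwards [eventually_ge_atTop 2] with N hN using key N hN
end

section
/- There exists a constant C > 0 such that for every odd integer N ≥ 3 and every n ∈ Λ_N*, it holds Σ_{k ∈ Λ_N*, k ≠ n} [ (|n-k|² + |n|²)/|n-k| + (|n-k|³ + |n|³)/|n-k|² ] ≤ C·( N³ + |n|²·N·log N + |n|³·log N ), where |·| denotes the Euclidean norm on ℤ² ⊂ ℝ². -/
set_option maxHeartbeats 800000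


/-- The Euclidean norm of a lattice point `n ∈ ℤ² ⊂ ℝ²`. -/
noncomputable def enorm2 (n : ℤ × ℤ) : ℝ :=
  Real.sqrt ((n.1 : ℝ) ^ 2 + (n.2 : ℝ) ^ 2)

/-- The nonzero modes `Λ_N* = {n ∈ ℤ² \ {0} : |n₁| ≤ (N-1)/2, |n₂| ≤ (N-1)/2}`. -/
noncomputable def Lam (N : ℕ) : Finset (ℤ × ℤ) :=
  ((Finset.Icc (-(((N : ℤ) - 1) / 2)) (((N : ℤ) - 1) / 2)) ×ˢ
    (Finset.Icc (-(((N : ℤ) - 1) / 2)) (((N : ℤ) - 1) / 2))).erase (0, 0)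

open Finset

/-- sup norm of a lattice point, as a natural number -/
def mnat (j : ℤ × ℤ) : ℕ := max j.1.natAbs j.2.natAbs

lemma mnat_pos {j : ℤ × ℤ} (h : j ≠ 0) : 1 ≤ mnat j := by
  rcases Nat.eq_zero_or_pos (mnat j) with h0 | h1
  · exfalso
    apply h
    have h1 : j.1.natAbs = 0 := Nat.le_zero.mp (h0 ▸ le_max_left j.1.natAbs j.2.natAbs)
    have h2 : j.2.natAbs = 0 := Nat.le_zero.mp (h0 ▸ le_max_right j.1.natAbs j.2.natAbs)
    exact Prod.ext (Int.natAbs_eq_zero.mp h1) (Int.natAbs_eq_zero.mp h2)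
  · exact h1

lemma enorm2_nonneg (j : ℤ × ℤ) : 0 ≤ enorm2 j := Real.sqrt_nonneg _

lemma cast_natAbs_sq (a : ℤ) : ((a.natAbs : ℝ)) ^ 2 = (a : ℝ) ^ 2 := by
  rw [← Int.cast_natCast, ← Int.cast_pow, Int.natAbs_sq, Int.cast_pow]

lemma mnat_le_enorm2 (j : ℤ × ℤ) : (mnat j : ℝ) ≤ enorm2 j := by
  have key : ((mnat j : ℝ)) ^ 2 ≤ (j.1 : ℝ) ^ 2 + (j.2 : ℝ) ^ 2 := by
    rcases max_choice j.1.natAbs j.2.natAbs with h | h <;> rw [mnat, h, cast_natAbs_sq] <;>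
      nlinarith [sq_nonneg (j.1 : ℝ), sq_nonneg (j.2 : ℝ)]
  calc (mnat j : ℝ) = Real.sqrt ((mnat j : ℝ) ^ 2) := by
        rw [Real.sqrt_sq (by positivity)]
    _ ≤ enorm2 j := Real.sqrt_le_sqrt key

lemma enorm2_le_two_mnat (j : ℤ × ℤ) : enorm2 j ≤ 2 * (mnat j : ℝ) := by
  have h1 : (j.1 : ℝ) ^ 2 ≤ (mnat j : ℝ) ^ 2 := by
    rw [← cast_natAbs_sq]
    have : (j.1.natAbs : ℝ) ≤ (mnat j : ℝ) := by
      exact_mod_cast le_max_left j.1.natAbs j.2.natAbs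
    nlinarith [Nat.cast_nonneg (α := ℝ) j.1.natAbs]
  have h2 : (j.2 : ℝ) ^ 2 ≤ (mnat j : ℝ) ^ 2 := by
    rw [← cast_natAbs_sq]
    have : (j.2.natAbs : ℝ) ≤ (mnat j : ℝ) := by
      exact_mod_cast le_max_right j.1.natAbs j.2.natAbs
    nlinarith [Nat.cast_nonneg (α := ℝ) j.2.natAbs]
  calc enorm2 j ≤ Real.sqrt ((2 * (mnat j : ℝ)) ^ 2) := by
        apply Real.sqrt_le_sqrt; nlinarith
    _ = 2 * (mnat j : ℝ) := Real.sqrt_sq (by positivity)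

/-- the box of sup-norm radius r -/
noncomputable def ibox (r : ℕ) : Finset (ℤ × ℤ) :=
  Finset.Icc (-(r : ℤ)) r ×ˢ Finset.Icc (-(r : ℤ)) r

lemma mem_ibox {r : ℕ} {j : ℤ × ℤ} : j ∈ ibox r ↔ mnat j ≤ r := by
  unfold ibox mnat
  rw [Finset.mem_product, Finset.mem_Icc, Finset.mem_Icc, max_le_iff]
  omega

lemma card_ibox (r : ℕ) : (ibox r).card = (2 * r + 1) ^ 2 := by
  have h : (Finset.Icc (-(r : ℤ)) r).card = 2 * r + 1 := by
    rw [Int.card_Icc]; omega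
  rw [ibox, Finset.card_product, h]; ring

lemma card_ishell {m : ℕ} (hm : 1 ≤ m) : (ibox m \ ibox (m - 1)).card = 8 * m := by
  have hsub : ibox (m - 1) ⊆ ibox m := by
    intro j hj; rw [mem_ibox] at *; omega
  rw [Finset.card_sdiff_of_subset hsub, card_ibox, card_ibox]
  obtain ⟨s, rfl⟩ := Nat.exists_eq_add_of_le hm
  have : (2 * (1 + s) + 1) ^ 2 = (2 * (1 + s - 1) + 1) ^ 2 + 8 * (1 + s) := by
    have : 1 + s - 1 = s := by omega
    rw [this]; ring
  omega

lemma mem_Lam_bounds {N : ℕ} {n : ℤ × ℤ} (hn : n ∈ Lam N) :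
    n ≠ 0 ∧ n.1.natAbs ≤ (((N : ℤ) - 1) / 2).natAbs ∧
      n.2.natAbs ≤ (((N : ℤ) - 1) / 2).natAbs := by
  rw [Lam, Finset.mem_erase, Finset.mem_product, Finset.mem_Icc, Finset.mem_Icc] at hn
  obtain ⟨hne, ⟨h1, h2⟩, h3, h4⟩ := hn
  refine ⟨fun h => hne (by rw [h]; rfl), ?_, ?_⟩ <;> omega

lemma mnat_sub_le {N : ℕ} (hN : 3 ≤ N) {n k : ℤ × ℤ} (hn : n ∈ Lam N) (hk : k ∈ Lam N) :
    mnat (n - k) ≤ N - 1 := by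
  obtain ⟨-, hn1, hn2⟩ := mem_Lam_bounds hn
  obtain ⟨-, hk1, hk2⟩ := mem_Lam_bounds hk
  have hq : (((N : ℤ) - 1) / 2).natAbs * 2 ≤ N - 1 := by omega
  have e1 : (n - k).1 = n.1 - k.1 := rfl
  have e2 : (n - k).2 = n.2 - k.2 := rfl
  rw [mnat, e1, e2]
  have := Int.natAbs_sub_le n.1 k.1
  have := Int.natAbs_sub_le n.2 k.2
  omega

/-- shell-decomposition bound for sums of radial functions over the punctured box -/
lemma shell_sum_le {N : ℕ} (hN : 3 ≤ N) {n : ℤ × ℤ} (hn : n ∈ Lam N)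
    (g : ℕ → ℝ) (hg : ∀ m, 0 ≤ g m) :
    ∑ k ∈ (Lam N).erase n, g (mnat (n - k)) ≤
      ∑ m ∈ Finset.Icc 1 (N - 1), (8 * m : ℝ) * g m := by
  classical
  have hmaps : ∀ k ∈ (Lam N).erase n, mnat (n - k) ∈ Finset.Icc 1 (N - 1) := by
    intro k hk
    rw [Finset.mem_erase] at hk
    obtain ⟨hkn, hkL⟩ := hk
    rw [Finset.mem_Icc]
    exact ⟨mnat_pos (sub_ne_zero.mpr (Ne.symm hkn)), mnat_sub_le hN hn hkL⟩
  rw [← Finset.sum_fiberwise_of_maps_to hmaps]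
  apply Finset.sum_le_sum
  intro m hm
  rw [Finset.mem_Icc] at hm
  have hcard : ((Lam N).erase n |>.filter (fun k => mnat (n - k) = m)).card ≤ 8 * m := by
    rw [← card_ishell hm.1]
    apply Finset.card_le_card_of_injOn (fun k => n - k)
    · intro k hk
      rw [Finset.mem_coe, Finset.mem_filter] at hk
      rw [Finset.mem_coe, Finset.mem_sdiff, mem_ibox, mem_ibox, hk.2]
      omega
    · intro a _ b _ hab
      exact sub_right_injective hab
  calc ∑ k ∈ ((Lam N).erase n |>.filter (fun k => mnat (n - k) = m)), g (mnat (n - k))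
      = ∑ k ∈ ((Lam N).erase n |>.filter (fun k => mnat (n - k) = m)), g m := by
        apply Finset.sum_congr rfl
        intro k hk
        rw [(Finset.mem_filter.mp hk).2]
    _ = (((Lam N).erase n |>.filter (fun k => mnat (n - k) = m)).card : ℝ) * g m := by
        rw [Finset.sum_const, nsmul_eq_mul]
    _ ≤ (8 * m : ℝ) * g m := by
        apply mul_le_mul_of_nonneg_right _ (hg m)
        exact_mod_cast hcard

/-- Lattice-sum estimate: there is `C > 0` such that for every odd `N ≥ 3` and every
`n ∈ Λ_N*`,
`Σ_{k ∈ Λ_N*, k ≠ n} [(|n-k|²+|n|²)/|n-k| + (|n-k|³+|n|³)/|n-k|²]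
  ≤ C(N³ + |n|²·N·log N + |n|³·log N)`. -/
theorem lattice_sum_estimate : ∃ C : ℝ, 0 < C ∧
    ∀ N : ℕ, Odd N → 3 ≤ N → ∀ n ∈ Lam N,
    ∑ k ∈ (Lam N).erase n,
        ((enorm2 (n - k) ^ 2 + enorm2 n ^ 2) / enorm2 (n - k) +
          (enorm2 (n - k) ^ 3 + enorm2 n ^ 3) / enorm2 (n - k) ^ 2) ≤
      C * ((N : ℝ) ^ 3 + enorm2 n ^ 2 * (N : ℝ) * Real.log N +
        enorm2 n ^ 3 * Real.log N) := by
  refine ⟨32, by norm_num, ?_⟩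
  intro N _hodd hN3 n hn
  set a : ℝ := enorm2 n with ha
  have ha0 : 0 ≤ a := enorm2_nonneg n
  set M : ℕ := N - 1 with hM
  have hMN : (M : ℝ) ≤ (N : ℝ) := by exact_mod_cast Nat.sub_le N 1
  have hM1 : 1 ≤ M := by omega
  have hN0 : (0:ℝ) < N := by positivity
  have hlog1 : (1:ℝ) ≤ Real.log N := by
    have h3 : Real.exp 1 ≤ (N : ℝ) := by
      have := Real.exp_one_lt_d9
      have h3N : (3:ℝ) ≤ (N:ℝ) := by exact_mod_cast hN3
      linarith
    calc (1:ℝ) = Real.log (Real.exp 1) := (Real.log_exp 1).symm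
      _ ≤ Real.log N := Real.log_le_log (Real.exp_pos 1) h3
  -- the radial majorant
  set g : ℕ → ℝ := fun m => 4 * (N : ℝ) + a ^ 2 / (m : ℝ) + a ^ 3 / (m : ℝ) ^ 2 with hg
  have hgnn : ∀ m, 0 ≤ g m := by intro m; rw [hg]; positivity
  -- pointwise bound
  have hpt : ∀ k ∈ (Lam N).erase n,
      (enorm2 (n - k) ^ 2 + a ^ 2) / enorm2 (n - k) +
        (enorm2 (n - k) ^ 3 + a ^ 3) / enorm2 (n - k) ^ 2 ≤ g (mnat (n - k)) := by
    intro k hk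
    rw [Finset.mem_erase] at hk
    obtain ⟨hkn, hkL⟩ := hk
    have hjne : n - k ≠ 0 := sub_ne_zero.mpr (Ne.symm hkn)
    set e : ℝ := enorm2 (n - k) with he
    set m : ℝ := (mnat (n - k) : ℝ) with hm
    have hm1 : (1:ℝ) ≤ m := by rw [hm]; exact_mod_cast mnat_pos hjne
    have hme : m ≤ e := mnat_le_enorm2 _
    have he0 : (0:ℝ) < e := lt_of_lt_of_le (by linarith) hme
    have hm0 : (0:ℝ) < m := by linarith
    have hmN : m ≤ (N : ℝ) - 1 := by
      have := mnat_sub_le hN3 hn hkL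
      have h1 : (mnat (n - k) : ℝ) ≤ ((N - 1 : ℕ) : ℝ) := by exact_mod_cast this
      have h2 : ((N - 1 : ℕ) : ℝ) = (N : ℝ) - 1 := by
        have : (1:ℕ) ≤ N := by omega
        push_cast [this]; ring
      linarith [h2 ▸ h1]
    have heN : e ≤ 2 * ((N:ℝ) - 1) := by
      have := enorm2_le_two_mnat (n - k)
      rw [← he, ← hm] at this
      linarith
    have key1 : (e ^ 2 + a ^ 2) / e = e + a ^ 2 / e := by
      field_simp
    have key2 : (e ^ 3 + a ^ 3) / e ^ 2 = e + a ^ 3 / e ^ 2 := by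
      field_simp
    rw [key1, key2, hg]
    have b1 : a ^ 2 / e ≤ a ^ 2 / m := div_le_div_of_nonneg_left (by positivity) hm0 hme
    have b2 : a ^ 3 / e ^ 2 ≤ a ^ 3 / m ^ 2 := by
      apply div_le_div_of_nonneg_left (by positivity) (by positivity)
      nlinarith
    simp only
    linarith
  -- combine
  have step1 : ∑ k ∈ (Lam N).erase n,
      ((enorm2 (n - k) ^ 2 + a ^ 2) / enorm2 (n - k) +
        (enorm2 (n - k) ^ 3 + a ^ 3) / enorm2 (n - k) ^ 2) ≤
      ∑ k ∈ (Lam N).erase n, g (mnat (n - k)) := Finset.sum_le_sum hpt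
  have step2 := shell_sum_le hN3 hn g hgnn
  -- bound the radial sum
  have step3 : ∑ m ∈ Finset.Icc 1 M, (8 * m : ℝ) * g m ≤
      (M : ℝ) * (32 * (N : ℝ) * M + 8 * a ^ 2) + 8 * a ^ 3 * (harmonic M : ℝ) := by
    have hsplit : ∀ m ∈ Finset.Icc 1 M, (8 * m : ℝ) * g m ≤
        (32 * (N : ℝ) * M + 8 * a ^ 2) + 8 * a ^ 3 * ((m : ℝ))⁻¹ := by
      intro m hm
      rw [Finset.mem_Icc] at hm
      have hm0 : (0:ℝ) < (m:ℝ) := by exact_mod_cast hm.1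
      have hmM : (m : ℝ) ≤ (M : ℝ) := by exact_mod_cast hm.2
      have e1 : (8 * m : ℝ) * (a ^ 2 / m) = 8 * a ^ 2 := by
        field_simp
      have e2 : (8 * m : ℝ) * (a ^ 3 / (m:ℝ) ^ 2) = 8 * a ^ 3 * ((m : ℝ))⁻¹ := by
        field_simp
      rw [hg]
      simp only
      rw [mul_add, mul_add, e1, e2]
      have : (8 * m : ℝ) * (4 * N) ≤ 32 * (N : ℝ) * M := by nlinarith
      linarith
    calc ∑ m ∈ Finset.Icc 1 M, (8 * m : ℝ) * g m
        ≤ ∑ m ∈ Finset.Icc 1 M, ((32 * (N : ℝ) * M + 8 * a ^ 2) + 8 * a ^ 3 * ((m : ℝ))⁻¹) :=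
          Finset.sum_le_sum hsplit
      _ = (Finset.Icc 1 M).card * (32 * (N : ℝ) * M + 8 * a ^ 2) +
            8 * a ^ 3 * ∑ m ∈ Finset.Icc 1 M, ((m : ℝ))⁻¹ := by
          rw [Finset.sum_add_distrib, Finset.sum_const, nsmul_eq_mul, Finset.mul_sum]
      _ = (M : ℝ) * (32 * (N : ℝ) * M + 8 * a ^ 2) + 8 * a ^ 3 * (harmonic M : ℝ) := by
          have hcast : ((harmonic M : ℚ) : ℝ) = ∑ m ∈ Finset.Icc 1 M, ((m : ℝ))⁻¹ := by
            rw [harmonic_eq_sum_Icc]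
            push_cast
            rfl
          rw [Nat.card_Icc, hcast]
          norm_num
  have hharm : (harmonic M : ℝ) ≤ 1 + Real.log N := by
    calc (harmonic M : ℝ) ≤ 1 + Real.log M := harmonic_le_one_add_log M
      _ ≤ 1 + Real.log N := by
        have := Real.log_le_log (by exact_mod_cast hM1 : (0:ℝ) < (M:ℝ)) hMN
        linarith
  -- final arithmetic
  have final : (M : ℝ) * (32 * (N : ℝ) * M + 8 * a ^ 2) + 8 * a ^ 3 * (harmonic M : ℝ) ≤
      32 * ((N : ℝ) ^ 3 + a ^ 2 * (N : ℝ) * Real.log N + a ^ 3 * Real.log N) := by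
    have hM0 : (0:ℝ) ≤ (M:ℝ) := by positivity
    have hlog0 : (0:ℝ) ≤ Real.log N := by linarith
    have hMM : (M:ℝ) * (M:ℝ) ≤ (N:ℝ) * (N:ℝ) := mul_le_mul hMN hMN hM0 hN0.le
    have h1 : (M : ℝ) * (32 * (N : ℝ) * M) ≤ 32 * (N : ℝ) ^ 3 := by
      nlinarith [mul_le_mul_of_nonneg_left hMM (by positivity : (0:ℝ) ≤ 32 * (N:ℝ))]
    have h2 : (M : ℝ) * (8 * a ^ 2) ≤ 32 * (a ^ 2 * (N : ℝ) * Real.log N) := by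
      nlinarith [mul_le_mul_of_nonneg_right hMN (by positivity : (0:ℝ) ≤ 8 * a ^ 2),
        mul_le_mul_of_nonneg_left hlog1 (by positivity : (0:ℝ) ≤ 8 * a ^ 2 * (N:ℝ)),
        mul_nonneg (mul_nonneg (sq_nonneg a) hN0.le) hlog0]
    have h3 : 8 * a ^ 3 * (harmonic M : ℝ) ≤ 32 * (a ^ 3 * Real.log N) := by
      have h8 : (0:ℝ) ≤ 8 * a ^ 3 := by positivity
      nlinarith [mul_le_mul_of_nonneg_left hharm h8,
        mul_le_mul_of_nonneg_left hlog1 h8,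
        mul_nonneg (pow_nonneg ha0 3) hlog0]
    linarith
  calc ∑ k ∈ (Lam N).erase n,
        ((enorm2 (n - k) ^ 2 + enorm2 n ^ 2) / enorm2 (n - k) +
          (enorm2 (n - k) ^ 3 + enorm2 n ^ 3) / enorm2 (n - k) ^ 2)
      ≤ ∑ m ∈ Finset.Icc 1 M, (8 * m : ℝ) * g m := le_trans step1 step2
    _ ≤ (M : ℝ) * (32 * (N : ℝ) * M + 8 * a ^ 2) + 8 * a ^ 3 * (harmonic M : ℝ) := step3
    _ ≤ 32 * ((N : ℝ) ^ 3 + a ^ 2 * (N : ℝ) * Real.log N + a ^ 3 * Real.log N) := final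
end
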